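/- arXiv:1505.06380 — 2 statements merged into one kernel-verified Lean document; each statement's English description precedes it below -/
import Mathlib

section
/- If the γ-numbers of a (d-1)-dimensional homology sphere are all nonnegative, then j·h_j ≥ (d-j+1)·h_{j-1} for all j ≤ ⌊d/2⌋; equivalently h_{j-1}/C(d,j-1) ≤ h_j/C(d,j), i.e., Gal's conjecture implies the balanced GLBC inequalities. -/
open Finset

lemma key_choose_ineq (d i j : ℕ) (hij : i < j) (hjd : 2 * j ≤ d) :
    (d - j + 1) * (d - 2 * i).choose (j - 1 - i) ≤ j * (d - 2 * i).choose (j - i) := by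
  obtain ⟨k, hk⟩ : ∃ k, j = i + k + 1 := ⟨j - i - 1, by omega⟩
  obtain ⟨m, hm⟩ : ∃ m, d = i + j + m := ⟨d - i - j, by omega⟩
  have hjk : j - i = k + 1 := by omega
  have hjk1 : j - 1 - i = k := by omega
  have hid : d - 2 * i - k = m + 1 := by omega
  have hmk : k + 1 ≤ m := by omega
  have hcs := Nat.choose_succ_right_eq (d - 2 * i) k
  rw [hjk, hjk1]
  have hscalar : (d - j + 1) * (k + 1) ≤ j * (m + 1) := by
    have h1 : d - j + 1 = i + m + 1 := by omega
    rw [h1, hk]; nlinarith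
  -- multiply target by (k+1)
  have : (d - j + 1) * (d - 2 * i).choose k * (k + 1) ≤
      j * (d - 2 * i).choose (k + 1) * (k + 1) := by
    calc (d - j + 1) * (d - 2 * i).choose k * (k + 1)
        = (d - 2 * i).choose k * ((d - j + 1) * (k + 1)) := by ring
      _ ≤ (d - 2 * i).choose k * (j * (m + 1)) :=
          Nat.mul_le_mul_left _ hscalar
      _ = j * ((d - 2 * i).choose k * (m + 1)) := by ring
      _ = j * ((d - 2 * i).choose (k + 1) * (k + 1)) := by rw [hcs, hid]
      _ = j * (d - 2 * i).choose (k + 1) * (k + 1) := by ring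
  exact Nat.le_of_mul_le_mul_right this (Nat.succ_pos k)

/-- If the γ-numbers of a palindromic h-vector (e.g., of a flag homology
sphere) are all nonnegative, then `j·h_j ≥ (d-j+1)·h_{j-1}` for all
`j ≤ ⌊d/2⌋`; i.e., Gal's conjecture implies the balanced GLBC inequalities
`h_{j-1}/C(d,j-1) ≤ h_j/C(d,j)`. Here `h_j = ∑_i γ_i C(d-2i, j-i)`. -/
theorem gamma_nonneg_implies_balanced_glbc (d : ℕ) (γ : ℕ → ℤ)
    (hγ : ∀ i, 0 ≤ γ i) (h : ℕ → ℤ)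
    (hh : ∀ j, h j = ∑ i ∈ range (j + 1), γ i * ((d - 2 * i).choose (j - i) : ℤ)) :
    ∀ j, 1 ≤ j → j ≤ d / 2 →
      ((d : ℤ) - j + 1) * h (j - 1) ≤ (j : ℤ) * h j := by
  intro j hj1 hjd
  have hjd' : 2 * j ≤ d := by omega
  have hcast : ((d : ℤ) - j + 1) = ((d - j + 1 : ℕ) : ℤ) := by
    push_cast [Nat.sub_add_cancel]; omega
  rw [hh, hh, hcast, Finset.mul_sum, Finset.mul_sum]
  have hstep : j - 1 + 1 = j := by omega
  rw [hstep]
  calc ∑ i ∈ range j, ((d - j + 1 : ℕ) : ℤ) * (γ i * ((d - 2 * i).choose (j - 1 - i) : ℤ))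
      ≤ ∑ i ∈ range j, (j : ℤ) * (γ i * ((d - 2 * i).choose (j - i) : ℤ)) := by
        apply Finset.sum_le_sum
        intro i hi
        rw [Finset.mem_range] at hi
        have hk := key_choose_ineq d i j hi hjd'
        have : ((d - j + 1 : ℕ) : ℤ) * ((d - 2 * i).choose (j - 1 - i) : ℤ)
            ≤ (j : ℤ) * ((d - 2 * i).choose (j - i) : ℤ) := by exact_mod_cast hk
        calc ((d - j + 1 : ℕ) : ℤ) * (γ i * ((d - 2 * i).choose (j - 1 - i) : ℤ))
            = γ i * (((d - j + 1 : ℕ) : ℤ) * ((d - 2 * i).choose (j - 1 - i) : ℤ)) := by ring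
          _ ≤ γ i * ((j : ℤ) * ((d - 2 * i).choose (j - i) : ℤ)) :=
              mul_le_mul_of_nonneg_left this (hγ i)
          _ = (j : ℤ) * (γ i * ((d - 2 * i).choose (j - i) : ℤ)) := by ring
    _ ≤ ∑ i ∈ range (j + 1), (j : ℤ) * (γ i * ((d - 2 * i).choose (j - i) : ℤ)) := by
        apply Finset.sum_le_sum_of_subset_of_nonneg
        · exact Finset.range_subset_range.mpr (by omega)
        · intro i _ _
          exact mul_nonneg (Int.natCast_nonneg j) (mul_nonneg (hγ i) (Int.natCast_nonneg _))
end

section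
/- For j ≤ ⌊d/2⌋ and 0 ≤ i ≤ j-1, the binomial inequality j·C(d-2i, j-i) ≥ (d-j+1)·C(d-2i, j-i-1) holds. -/
/-- For `j ≤ ⌊d/2⌋` and `0 ≤ i ≤ j-1`, the binomial inequality
`j·C(d-2i, j-i) ≥ (d-j+1)·C(d-2i, j-i-1)` holds. -/
theorem binomial_inequality (d i j : ℕ) (hij : i + 1 ≤ j) (hjd : 2 * j ≤ d) :
    (d - j + 1) * (d - 2 * i).choose (j - i - 1) ≤ j * (d - 2 * i).choose (j - i) := by
  set n := d - 2 * i with hn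
  obtain ⟨k, hk⟩ : ∃ k, j - i = k + 1 := ⟨j - i - 1, by omega⟩
  have h1 : n.choose (k + 1) * (k + 1) = n.choose k * (n - k) :=
    Nat.choose_succ_right_eq n k
  rw [hk]
  simp only [Nat.add_sub_cancel]
  have key : (k + 1) * ((d - j + 1) * n.choose k) ≤ (k + 1) * (j * n.choose (k + 1)) := by
    calc (k + 1) * ((d - j + 1) * n.choose k)
        = (d - j + 1) * (k + 1) * n.choose k := by ring
      _ ≤ j * (n - k) * n.choose k := by
          apply Nat.mul_le_mul_right
          have h2 : n - k = d - i - j + 1 := by omega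
          rw [h2]
          obtain ⟨a, ha1, ha2⟩ : ∃ a, d = a + j ∧ j ≤ a := ⟨d - j, by omega, by omega⟩
          have h3 : d - j + 1 = a + 1 := by omega
          have h4 : d - i - j + 1 = a - i + 1 := by omega
          obtain ⟨b, hb⟩ : ∃ b, a = b + i := ⟨a - i, by omega⟩
          have h5 : a - i = b := by omega
          rw [h3, h4, h5]
          have hkji : k + 1 = j - i := hk.symm
          obtain ⟨c, hc⟩ : ∃ c, j = c + i + 1 := ⟨j - i - 1, by omega⟩
          have h6 : k = c := by omega
          subst h6 hc hb ha1
          nlinarith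
      _ = j * (n.choose k * (n - k)) := by ring
      _ = j * (n.choose (k + 1) * (k + 1)) := by rw [h1]
      _ = (k + 1) * (j * n.choose (k + 1)) := by ring
  exact Nat.le_of_mul_le_mul_left key (by omega)
end
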